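/- Let u : ℝ × ℝ → ℝ be smooth, m = u − u_{xx}, M = cos(u² − u_x²)·m·u_x, and suppose that for all (t,x) the following three identities hold: (i) m_t + sin(u² − u_x²)·m_x = −2·m·M; (ii) u_t + sin(u² − u_x²)·u_x = −2·p*(u·M) − 2·[p₋*(u_x·M) − p₊*(u_x·M)]; (iii) u_{tx} + sin(u² − u_x²)·u_{xx} = −2·[p₋*(u·M) − p₊*(u·M)] − 2·p*(u_x·M) (convolutions in x, for each fixed t, all assumed well defined with bounded integrands). Then M_t + sin(u² − u_x²)·M_x = 4·sin(u² − u_x²)·m·u·u_x·[p*(u·M) + p₋*(u_x·M) − p₊*(u_x·M)] − 4·sin(u² − u_x²)·m·u_x²·[p₋*(u·M) − p₊*(u·M) + p*(u_x·M)] − 2·M² − 2·cos(u² − u_x²)·m·[p₋*(u·M) − p₊*(u·M) + p*(u_x·M)]. -/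

import Mathlib

open MeasureTheory Real Set

/-- The convolution `(p*f)(x) = ∫_ℝ (1/2) e^{-|x-y|} f(y) dy` with `p(x) = (1/2)exp(-|x|)`. -/
noncomputable def pConv (f : ℝ → ℝ) (x : ℝ) : ℝ := ∫ y : ℝ, (1/2) * Real.exp (-|x - y|) * f y

/-- `(p₊*f)(x) = (1/2)∫_{-∞}^{x} e^{y-x} f(y) dy`. -/
noncomputable def pPlus (f : ℝ → ℝ) (x : ℝ) : ℝ := (1/2) * ∫ y in Set.Iic x, Real.exp (y - x) * f y

/-- `(p₋*f)(x) = (1/2)∫_{x}^{∞} e^{x-y} f(y) dy`. -/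
noncomputable def pMinus (f : ℝ → ℝ) (x : ℝ) : ℝ := (1/2) * ∫ y in Set.Ici x, Real.exp (x - y) * f y

/-- Spatial partial derivative `∂ₓ` of a function of `(t, x)`. -/
noncomputable def pdx (f : ℝ → ℝ → ℝ) : ℝ → ℝ → ℝ := fun t x => deriv (fun y => f t y) x

/-- Time partial derivative `∂ₜ` of a function of `(t, x)`. -/
noncomputable def pdt (f : ℝ → ℝ → ℝ) : ℝ → ℝ → ℝ := fun t x => deriv (fun s => f s x) t

/-- The momentum density `m = u - u_{xx}`. -/
noncomputable def mF (u : ℝ → ℝ → ℝ) : ℝ → ℝ → ℝ := fun t x => u t x - pdx (pdx u) t x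

/-- The blow-up quantity `M = cos(u² - u_x²) · m · u_x`. -/
noncomputable def MF (u : ℝ → ℝ → ℝ) : ℝ → ℝ → ℝ :=
  fun t x => Real.cos ((u t x) ^ 2 - (pdx u t x) ^ 2) * mF u t x * pdx u t x

lemma hasDerivAt_x (f : ℝ → ℝ → ℝ) (hf : ContDiff ℝ (⊤ : ℕ∞) (Function.uncurry f)) (t x : ℝ) :
    HasDerivAt (fun y => f t y) (fderiv ℝ (Function.uncurry f) (t, x) (0, 1)) x := by
  have h1 : HasFDerivAt (Function.uncurry f) (fderiv ℝ (Function.uncurry f) (t, x)) (t, x) :=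
    (hf.differentiable (by simp) (t, x)).hasFDerivAt
  have h2 : HasDerivAt (fun y : ℝ => (t, y)) ((0 : ℝ), (1 : ℝ)) x :=
    (hasDerivAt_const x t).prodMk (hasDerivAt_id x)
  exact h1.comp_hasDerivAt x h2

lemma hasDerivAt_t (f : ℝ → ℝ → ℝ) (hf : ContDiff ℝ (⊤ : ℕ∞) (Function.uncurry f)) (t x : ℝ) :
    HasDerivAt (fun s => f s x) (fderiv ℝ (Function.uncurry f) (t, x) (1, 0)) t := by
  have h1 : HasFDerivAt (Function.uncurry f) (fderiv ℝ (Function.uncurry f) (t, x)) (t, x) :=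
    (hf.differentiable (by simp) (t, x)).hasFDerivAt
  have h2 : HasDerivAt (fun s : ℝ => (s, x)) ((1 : ℝ), (0 : ℝ)) t :=
    (hasDerivAt_id t).prodMk (hasDerivAt_const t x)
  exact h1.comp_hasDerivAt t h2

lemma pdx_eq (f : ℝ → ℝ → ℝ) (hf : ContDiff ℝ (⊤ : ℕ∞) (Function.uncurry f)) (t x : ℝ) :
    pdx f t x = fderiv ℝ (Function.uncurry f) (t, x) (0, 1) :=
  (hasDerivAt_x f hf t x).deriv

lemma pdt_eq (f : ℝ → ℝ → ℝ) (hf : ContDiff ℝ (⊤ : ℕ∞) (Function.uncurry f)) (t x : ℝ) :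
    pdt f t x = fderiv ℝ (Function.uncurry f) (t, x) (1, 0) :=
  (hasDerivAt_t f hf t x).deriv

lemma contDiff_pdx (f : ℝ → ℝ → ℝ) (hf : ContDiff ℝ (⊤ : ℕ∞) (Function.uncurry f)) :
    ContDiff ℝ (⊤ : ℕ∞) (Function.uncurry (pdx f)) := by
  have h : Function.uncurry (pdx f)
      = fun p : ℝ × ℝ => fderiv ℝ (Function.uncurry f) p ((0 : ℝ), (1 : ℝ)) := by
    funext p
    exact pdx_eq f hf p.1 p.2
  rw [h]
  exact (ContinuousLinearMap.apply ℝ ℝ ((0 : ℝ), (1 : ℝ))).contDiff.comp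
    (hf.fderiv_right (by exact_mod_cast le_top))

lemma contDiff_pdt (f : ℝ → ℝ → ℝ) (hf : ContDiff ℝ (⊤ : ℕ∞) (Function.uncurry f)) :
    ContDiff ℝ (⊤ : ℕ∞) (Function.uncurry (pdt f)) := by
  have h : Function.uncurry (pdt f)
      = fun p : ℝ × ℝ => fderiv ℝ (Function.uncurry f) p ((1 : ℝ), (0 : ℝ)) := by
    funext p
    exact pdt_eq f hf p.1 p.2
  rw [h]
  exact (ContinuousLinearMap.apply ℝ ℝ ((1 : ℝ), (0 : ℝ))).contDiff.comp
    (hf.fderiv_right (by exact_mod_cast le_top))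

lemma fderiv_apply_dir (f : ℝ → ℝ → ℝ) (hf : ContDiff ℝ (⊤ : ℕ∞) (Function.uncurry f))
    (t x : ℝ) (v w : ℝ × ℝ) :
    fderiv ℝ (fun p : ℝ × ℝ => fderiv ℝ (Function.uncurry f) p v) (t, x) w
      = fderiv ℝ (fderiv ℝ (Function.uncurry f)) (t, x) w v := by
  have hd : HasFDerivAt (fderiv ℝ (Function.uncurry f))
      (fderiv ℝ (fderiv ℝ (Function.uncurry f)) (t, x)) (t, x) :=
    (((hf.fderiv_right (m := ((⊤:ℕ∞) : WithTop ℕ∞)) (by exact_mod_cast le_top)).differentiable (by simp)) (t, x)).hasFDerivAt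
  have hc := (ContinuousLinearMap.apply ℝ ℝ v).hasFDerivAt.comp (t, x) hd
  rw [show (fun p : ℝ × ℝ => fderiv ℝ (Function.uncurry f) p v)
      = ⇑((ContinuousLinearMap.apply ℝ ℝ) v) ∘ fderiv ℝ (Function.uncurry f) from rfl, hc.fderiv]
  rfl

lemma schwarz (f : ℝ → ℝ → ℝ) (hf : ContDiff ℝ (⊤ : ℕ∞) (Function.uncurry f)) (t x : ℝ) :
    pdt (pdx f) t x = pdx (pdt f) t x := by
  have hsymm : IsSymmSndFDerivAt ℝ (Function.uncurry f) (t, x) :=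
    hf.contDiffAt.isSymmSndFDerivAt (by
      refine le_trans ?_ (WithTop.coe_le_coe.mpr (le_top : (2:ℕ∞) ≤ ⊤))
      norm_cast
      simp)
  have h1 := pdt_eq (pdx f) (contDiff_pdx f hf) t x
  have h2 := pdx_eq (pdt f) (contDiff_pdt f hf) t x
  have e1 : Function.uncurry (pdx f)
      = fun p : ℝ × ℝ => fderiv ℝ (Function.uncurry f) p ((0 : ℝ), (1 : ℝ)) := by
    funext p; exact pdx_eq f hf p.1 p.2
  have e2 : Function.uncurry (pdt f)
      = fun p : ℝ × ℝ => fderiv ℝ (Function.uncurry f) p ((1 : ℝ), (0 : ℝ)) := by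
    funext p; exact pdt_eq f hf p.1 p.2
  rw [e1] at h1
  rw [e2] at h2
  rw [h1, h2, fderiv_apply_dir f hf, fderiv_apply_dir f hf]
  exact hsymm _ _


lemma hasDerivAt_t' (f : ℝ → ℝ → ℝ) (hf : ContDiff ℝ (⊤ : ℕ∞) (Function.uncurry f)) (t x : ℝ) :
    HasDerivAt (fun s => f s x) (pdt f t x) t := by
  rw [pdt_eq f hf t x]; exact hasDerivAt_t f hf t x

lemma hasDerivAt_x' (f : ℝ → ℝ → ℝ) (hf : ContDiff ℝ (⊤ : ℕ∞) (Function.uncurry f)) (t x : ℝ) :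
    HasDerivAt (fun y => f t y) (pdx f t x) x := by
  rw [pdx_eq f hf t x]; exact hasDerivAt_x f hf t x

theorem stmt9 (u : ℝ → ℝ → ℝ) (hu : ContDiff ℝ (⊤ : ℕ∞) (Function.uncurry u))
    (hb : ∀ t : ℝ, ∃ C : ℝ, ∀ x : ℝ,
      |u t x * MF u t x| ≤ C ∧ |pdx u t x * MF u t x| ≤ C)
    -- (i) m_t + sin(u² - u_x²)·m_x = -2·m·M
    (hi : ∀ t x : ℝ, pdt (mF u) t x
      + Real.sin ((u t x) ^ 2 - (pdx u t x) ^ 2) * pdx (mF u) t x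
      = -2 * mF u t x * MF u t x)
    -- (ii) u_t + sin(u² - u_x²)·u_x = -2·p*(u·M) - 2·[p₋*(u_x·M) - p₊*(u_x·M)]
    (hii : ∀ t x : ℝ, pdt u t x
      + Real.sin ((u t x) ^ 2 - (pdx u t x) ^ 2) * pdx u t x
      = -2 * pConv (fun y => u t y * MF u t y) x
        - 2 * (pMinus (fun y => pdx u t y * MF u t y) x
                - pPlus (fun y => pdx u t y * MF u t y) x))
    -- (iii) u_{tx} + sin(u² - u_x²)·u_{xx} = -2·[p₋*(u·M) - p₊*(u·M)] - 2·p*(u_x·M)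
    (hiii : ∀ t x : ℝ, pdx (pdt u) t x
      + Real.sin ((u t x) ^ 2 - (pdx u t x) ^ 2) * pdx (pdx u) t x
      = -2 * (pMinus (fun y => u t y * MF u t y) x
                - pPlus (fun y => u t y * MF u t y) x)
        - 2 * pConv (fun y => pdx u t y * MF u t y) x) :
    ∀ t x : ℝ, pdt (MF u) t x
      + Real.sin ((u t x) ^ 2 - (pdx u t x) ^ 2) * pdx (MF u) t x
      = 4 * Real.sin ((u t x) ^ 2 - (pdx u t x) ^ 2) * mF u t x * u t x * pdx u t x
          * (pConv (fun y => u t y * MF u t y) x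
              + pMinus (fun y => pdx u t y * MF u t y) x
              - pPlus (fun y => pdx u t y * MF u t y) x)
        - 4 * Real.sin ((u t x) ^ 2 - (pdx u t x) ^ 2) * mF u t x * (pdx u t x) ^ 2
          * (pMinus (fun y => u t y * MF u t y) x
              - pPlus (fun y => u t y * MF u t y) x
              + pConv (fun y => pdx u t y * MF u t y) x)
        - 2 * (MF u t x) ^ 2
        - 2 * Real.cos ((u t x) ^ 2 - (pdx u t x) ^ 2) * mF u t x
          * (pMinus (fun y => u t y * MF u t y) x
              - pPlus (fun y => u t y * MF u t y) x
              + pConv (fun y => pdx u t y * MF u t y) x) := by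
  
  intro t x
  have hux : ContDiff ℝ (⊤ : ℕ∞) (Function.uncurry (pdx u)) := contDiff_pdx u hu
  have huxx : ContDiff ℝ (⊤ : ℕ∞) (Function.uncurry (pdx (pdx u))) := contDiff_pdx (pdx u) hux
  have hm : ContDiff ℝ (⊤ : ℕ∞) (Function.uncurry (mF u)) := by
    have h : Function.uncurry (mF u)
        = fun p : ℝ × ℝ => Function.uncurry u p - Function.uncurry (pdx (pdx u)) p := rfl
    rw [h]; exact hu.sub huxx
  have hUt := hasDerivAt_t' u hu t x
  have hUxt := hasDerivAt_t' (pdx u) hux t x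
  have hmt := hasDerivAt_t' (mF u) hm t x
  have hUx := hasDerivAt_x' u hu t x
  have hUxx := hasDerivAt_x' (pdx u) hux t x
  have hmx := hasDerivAt_x' (mF u) hm t x
  have hMt := (((hUt.pow 2).sub (hUxt.pow 2)).cos.mul hmt).mul hUxt
  have hMx := (((hUx.pow 2).sub (hUxx.pow 2)).cos.mul hmx).mul hUxx
  have ept : pdt (MF u) t x = _ := hMt.deriv
  have epx : pdx (MF u) t x = _ := hMx.deriv
  have eq1 := hi t x
  have eq2 := hii t x
  have eq3 := hiii t x
  rw [← schwarz u hu t x] at eq3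
  rw [ept, epx]
  simp only [Pi.mul_apply, Pi.sub_apply, Pi.pow_apply]
  have eMF : MF u t x
      = Real.cos ((u t x) ^ 2 - (pdx u t x) ^ 2) * mF u t x * pdx u t x := rfl
  rw [eMF] at eq1 ⊢
  linear_combination
    (Real.cos ((u t x) ^ 2 - (pdx u t x) ^ 2) * pdx u t x) * eq1
    + (-2 * Real.sin ((u t x) ^ 2 - (pdx u t x) ^ 2) * mF u t x * pdx u t x * u t x) * eq2
    + (2 * Real.sin ((u t x) ^ 2 - (pdx u t x) ^ 2) * mF u t x * pdx u t x * pdx u t x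
        + Real.cos ((u t x) ^ 2 - (pdx u t x) ^ 2) * mF u t x) * eq3
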